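/- Let α ∈ (0,1), let s ≥ 1 be an integer, and let n, n_s be positive integers with n_s ≥ ⌈n·(1 − log s / log α)⌉ (note log α < 0, so 1 − log s/log α ≥ 1). Then (α/s)^{1/n_s} ≥ α^{1/n}. Consequently, for every σ_ε > 0, σ_ε·Φ⁻¹((α/s)^{1/n_s}) ≥ σ_ε·Φ⁻¹(α^{1/n}); i.e., the maximum certifiable radius of an n_s-sample test at confidence level 1 − α/s is at least as large as that of an n-sample test at confidence level 1 − α. -/
import Mathlib


open MeasureTheory ProbabilityTheory Set

/-- **Preserving the maximum certifiable radius under Bonferroni correction.**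
If `n_s ≥ ⌈n·(1 − log s / log α)⌉` then `(α/s)^{1/n_s} ≥ α^{1/n}`, and consequently
the maximum certifiable radius `σε·Φ⁻¹((α/s)^{1/n_s})` of an `n_s`-sample test at
confidence `1 − α/s` is at least as large as the radius `σε·Φ⁻¹(α^{1/n})` of an
`n`-sample test at confidence `1 − α`. -/
theorem certifyAdp_max_radius
    (α : ℝ) (hα : α ∈ Ioo (0:ℝ) 1) (s : ℕ) (hs : 1 ≤ s)
    (n ns : ℕ) (hn : 0 < n) (hns0 : 0 < ns)
    (hns : ⌈(n : ℝ) * (1 - Real.log s / Real.log α)⌉₊ ≤ ns)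
    (σε : ℝ) (hσε : 0 < σε)
    -- `Φ` is the standard normal CDF
    (Φ : ℝ → ℝ)
    (hΦ : ∀ t : ℝ, Φ t = (gaussianReal 0 1 (Iic t)).toReal)
    -- `Φinv` is its inverse on (0,1) (the standard normal quantile function)
    (Φinv : ℝ → ℝ)
    (hΦinv : ∀ p ∈ Ioo (0:ℝ) 1, Φ (Φinv p) = p) :
    α ^ ((1 : ℝ) / n) ≤ (α / s) ^ ((1 : ℝ) / ns) ∧
    σε * Φinv (α ^ ((1 : ℝ) / n)) ≤ σε * Φinv ((α / s) ^ ((1 : ℝ) / ns)) := by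
  obtain ⟨hα0, hα1⟩ := hα
  have hs0 : (0:ℝ) < s := by exact_mod_cast hs
  have hαs0 : (0:ℝ) < α / s := div_pos hα0 hs0
  have hαs1 : α / s < 1 := lt_of_le_of_lt (by
    apply div_le_self hα0.le
    exact_mod_cast hs) hα1
  have hlogα : Real.log α < 0 := Real.log_neg hα0 hα1
  have hlogs : 0 ≤ Real.log s := Real.log_nonneg (by exact_mod_cast hs)
  have hnR : (0:ℝ) < n := by exact_mod_cast hn
  have hnsR : (0:ℝ) < ns := by exact_mod_cast hns0
  -- key : ns ≥ n * (1 - log s / log α)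
  have hkey : (n : ℝ) * (1 - Real.log s / Real.log α) ≤ ns := by
    calc (n : ℝ) * (1 - Real.log s / Real.log α)
        ≤ ⌈(n : ℝ) * (1 - Real.log s / Real.log α)⌉₊ := Nat.le_ceil _
      _ ≤ ns := by exact_mod_cast hns
  -- main inequality via logs
  have hlog : Real.log α / n ≤ Real.log (α / s) / ns := by
    rw [Real.log_div hα0.ne' hs0.ne']
    rw [div_le_div_iff₀ hnR hnsR]
    have h1 : (n:ℝ) - n * (Real.log s / Real.log α) ≤ ns := by
      have := hkey; nlinarith [hkey]
    -- multiply by log α < 0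
    have h3 := mul_le_mul_of_nonpos_right h1 hlogα.le
    have h4 : Real.log s / Real.log α * Real.log α = Real.log s :=
      div_mul_cancel₀ _ (ne_of_lt hlogα)
    nlinarith [h3, h4]
  have hmain : α ^ ((1 : ℝ) / n) ≤ (α / s) ^ ((1 : ℝ) / ns) := by
    have e1 : Real.log (α ^ ((1:ℝ)/n)) = Real.log α / n := by
      rw [Real.log_rpow hα0]; ring
    have e2 : Real.log ((α/s) ^ ((1:ℝ)/ns)) = Real.log (α/s) / ns := by
      rw [Real.log_rpow hαs0]; ring
    have p1 : (0:ℝ) < α ^ ((1:ℝ)/n) := Real.rpow_pos_of_pos hα0 _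
    have p2 : (0:ℝ) < (α/s) ^ ((1:ℝ)/ns) := Real.rpow_pos_of_pos hαs0 _
    rw [← Real.log_le_log_iff p1 p2, e1, e2]
    exact hlog
  refine ⟨hmain, ?_⟩
  -- membership in (0,1)
  have m1 : α ^ ((1:ℝ)/n) ∈ Ioo (0:ℝ) 1 :=
    ⟨Real.rpow_pos_of_pos hα0 _, Real.rpow_lt_one hα0.le hα1 (by positivity)⟩
  have m2 : (α/s) ^ ((1:ℝ)/ns) ∈ Ioo (0:ℝ) 1 :=
    ⟨Real.rpow_pos_of_pos hαs0 _, Real.rpow_lt_one hαs0.le hαs1 (by positivity)⟩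
  -- Φ is monotone
  have hΦmono : Monotone Φ := by
    intro a b hab
    rw [hΦ a, hΦ b]
    exact ENNReal.toReal_mono (measure_ne_top _ _) (measure_mono (Iic_subset_Iic.mpr hab))
  have hinv : Φinv (α ^ ((1:ℝ)/n)) ≤ Φinv ((α/s) ^ ((1:ℝ)/ns)) := by
    rcases eq_or_lt_of_le hmain with h | h
    · rw [h]
    · by_contra hcon
      push_neg at hcon
      have := hΦmono hcon.le
      rw [hΦinv _ m1, hΦinv _ m2] at this
      linarith
  exact mul_le_mul_of_nonneg_left hinv hσε.le
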